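/- (Uniform beliefs obstruction) Let q ∈ ℝ^S be a probability vector with all entries strictly positive, Q = q 1_{N_gR}^T, and V = Q(I - T_RR) where T_RR is nonnegative with column sums at most 1. Fix a receiving agent k with 1^T t_{RR,k} < 1 (i.e., k is connected to at least one sending agent). If k is not connected to sending sub-network s (so attainability requires V(s,k) = 0), then attainability fails, since V(s,k) = (1 - 1^T t_{RR,k}) q(s) > 0. -/
import Mathlib


open Matrix in
theorem stmt12 {S NgR : ℕ}
    (T_RR : Matrix (Fin NgR) (Fin NgR) ℝ)
    (hRRnn : ∀ i j, 0 ≤ T_RR i j)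
    (hcol : ∀ j, ∑ i, T_RR i j ≤ 1)
    (q : Fin S → ℝ) (hqpos : ∀ s, 0 < q s) (hq1 : ∑ s, q s = 1)
    (k : Fin NgR) (hk : ∑ j, T_RR j k < 1) (s : Fin S) :
    (((Matrix.of fun (s' : Fin S) (_ : Fin NgR) => q s') * (1 - T_RR) : Matrix (Fin S) (Fin NgR) ℝ)) s k =
        (1 - ∑ j, T_RR j k) * q s ∧
    0 < (((Matrix.of fun (s' : Fin S) (_ : Fin NgR) => q s') * (1 - T_RR) : Matrix (Fin S) (Fin NgR) ℝ)) s k := by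
  have h : (((Matrix.of fun (s' : Fin S) (_ : Fin NgR) => q s') * (1 - T_RR) : Matrix (Fin S) (Fin NgR) ℝ)) s k =
      (1 - ∑ j, T_RR j k) * q s := by
    simp only [Matrix.mul_apply, Matrix.sub_apply, Matrix.one_apply, Matrix.of_apply,
      mul_sub, Finset.sum_sub_distrib, mul_ite, mul_one, mul_zero]
    rw [Finset.sum_ite_eq' Finset.univ k (fun _ => q s)]
    simp only [Finset.mem_univ, if_true, sub_mul, one_mul, Finset.sum_mul]
    exact congrArg (q s - ·) (Finset.sum_congr rfl fun x _ => mul_comm (q s) (T_RR x k))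
  exact ⟨h, h ▸ mul_pos (by linarith) (hqpos s)⟩
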